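/- arXiv:0806.1321 — 3 statements merged into one kernel-verified Lean document; each statement's English description precedes it below -/
import Mathlib

section
/- In a torsion-free group in which the centralizer of every nontrivial element is cyclic, if every element is n-divisible for every positive integer n, then the centralizer of every nontrivial element is a divisible abelian group — hence no group can simultaneously have all centralizers of nontrivial elements infinite cyclic and all elements divisible, unless the group is trivial. -/
/-- A subgroup `A` of `G` is malnormal if `A ∩ gAg⁻¹ ≠ 1` implies `g ∈ A`. -/
def IsMalnormal {G : Type*} [Group G] (A : Subgroup G) : Prop :=
  ∀ g : G, (∃ x : G, x ≠ 1 ∧ x ∈ A ∧ g⁻¹ * x * g ∈ A) → g ∈ A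

/-- `A` is a maximal abelian subgroup of `G`. -/
def IsMaximalAbelian {G : Type*} [Group G] (A : Subgroup G) : Prop :=
  IsMulCommutative A ∧ ∀ B : Subgroup G, IsMulCommutative B → A ≤ B → B = A

/-- A group is CSA if every maximal abelian subgroup is malnormal. -/
def IsCSA (G : Type*) [Group G] : Prop :=
  ∀ A : Subgroup G, IsMaximalAbelian A → IsMalnormal A

theorem stmt_10 {G : Type*} [Group G] (htf : ∀ g : G, g ≠ 1 → ¬IsOfFinOrder g)
    (hcyc : ∀ g : G, g ≠ 1 → IsCyclic (Subgroup.centralizer {g}))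
    (hdiv : ∀ g : G, ∀ n : ℕ, 1 ≤ n → ∃ h : G, h ^ n = g) :
    (∀ g : G, g ≠ 1 → ∀ x ∈ Subgroup.centralizer {g}, ∀ n : ℕ, 1 ≤ n →
        ∃ y ∈ Subgroup.centralizer ({g} : Set G), y ^ n = x) ∧
      ((∀ g : G, g ≠ 1 → Infinite (Subgroup.centralizer ({g} : Set G))) →
        ∀ g : G, g = 1) := by
  have part1 : ∀ g : G, g ≠ 1 → ∀ x ∈ Subgroup.centralizer ({g} : Set G), ∀ n : ℕ, 1 ≤ n →
      ∃ y ∈ Subgroup.centralizer ({g} : Set G), y ^ n = x := by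
    intro g hg x hx n hn
    by_cases hx1 : x = 1
    · exact ⟨1, Subgroup.one_mem _, by simp [hx1]⟩
    · obtain ⟨y, hy⟩ := hdiv x n hn
      -- y commutes with x
      have hyx : y ∈ Subgroup.centralizer ({x} : Set G) := by
        rw [Subgroup.mem_centralizer_iff]
        intro a ha
        rw [Set.mem_singleton_iff] at ha
        subst ha
        rw [← hy]
        exact (Commute.self_pow y n).symm
      have hgx : g ∈ Subgroup.centralizer ({x} : Set G) := by
        rw [Subgroup.mem_centralizer_iff]
        intro a ha
        rw [Set.mem_singleton_iff] at ha
        subst ha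
        have := Subgroup.mem_centralizer_iff.mp hx g (Set.mem_singleton g)
        exact this.symm
      haveI := hcyc x hx1
      letI : CommGroup (Subgroup.centralizer ({x} : Set G)) := IsCyclic.commGroup
      have hcomm : (⟨g, hgx⟩ : Subgroup.centralizer ({x} : Set G)) * ⟨y, hyx⟩
          = ⟨y, hyx⟩ * ⟨g, hgx⟩ := mul_comm _ _
      have hcomm' : g * y = y * g := congrArg Subtype.val hcomm
      refine ⟨y, ?_, hy⟩
      rw [Subgroup.mem_centralizer_iff]
      intro a ha
      rw [Set.mem_singleton_iff] at ha
      subst ha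
      exact hcomm'
  refine ⟨part1, ?_⟩
  intro hinf g
  by_contra hg
  haveI := hcyc g hg
  haveI := hinf g hg
  obtain ⟨z, hz⟩ := IsCyclic.exists_generator (α := Subgroup.centralizer ({g} : Set G))
  have hz1 : (z : G) ≠ 1 := by
    intro h
    have hzz : z = 1 := Subtype.ext h
    have hgmem : g ∈ Subgroup.centralizer ({g} : Set G) := by
      rw [Subgroup.mem_centralizer_iff]; intro a ha; rw [Set.mem_singleton_iff] at ha; subst ha; rfl
    obtain ⟨k, hk⟩ := hz ⟨g, hgmem⟩
    rw [hzz] at hk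
    simp at hk
    exact hg (congrArg Subtype.val hk).symm
  obtain ⟨y, hy, hy2⟩ := part1 g hg (z : G) z.2 2 (by norm_num)
  obtain ⟨k, hk⟩ := hz ⟨y, hy⟩
  have hzy : (z : G) ^ k = y := congrArg Subtype.val hk
  have h2k : (z : G) ^ (2 * k) = (z : G) := by
    rw [mul_comm 2 k, zpow_mul, hzy]
    norm_cast
  have : (z : G) ^ (2 * k - 1) = 1 := by
    rw [zpow_sub, h2k, zpow_one, mul_inv_cancel]
  have hfin : IsOfFinOrder (z : G) :=
    isOfFinOrder_iff_zpow_eq_one.mpr ⟨2 * k - 1, by omega, this⟩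
  exact htf (z : G) hz1 hfin
end

section
/- Let G be a group that is the union of an increasing chain of subgroups (G_k) such that for every k, every element of G_k is (k+1)-divisible in G_{k+1}, and all maximal abelian subgroups of G_k are conjugate in G_{k+1}. If G is a CSA-group, then every maximal abelian subgroup of G is divisible and any two maximal abelian subgroups of G are conjugate. -/
/-- In a CSA group, anything commuting with a nontrivial element of a maximal
abelian subgroup lies in that subgroup. -/
lemma mem_of_commute {G : Type*} [Group G] (hCSA : IsCSA G) {A : Subgroup G}
    (hA : IsMaximalAbelian A) {a g : G} (ha : a ∈ A) (ha1 : a ≠ 1)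
    (hc : g * a = a * g) : g ∈ A := by
  refine hCSA A hA g ⟨a, ha1, ha, ?_⟩
  have h : g⁻¹ * a * g = a := by
    rw [mul_assoc, ← hc, ← mul_assoc, inv_mul_cancel, one_mul]
  rw [h]; exact ha

theorem stmt_11 {G : Type*} [Group G] (f : ℕ → Subgroup G) (hmono : Monotone f)
    (hunion : ∀ g : G, ∃ k : ℕ, g ∈ f k)
    (hdivstep : ∀ k : ℕ, ∀ g ∈ f k, ∃ h ∈ f (k + 1), h ^ (k + 1) = g)
    (hconjstep : ∀ k : ℕ, ∀ A B : Subgroup G, A ≤ f k → B ≤ f k →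
      (IsMulCommutative A ∧ ∀ C : Subgroup G, C ≤ f k → IsMulCommutative C → A ≤ C → C = A) →
      (IsMulCommutative B ∧ ∀ C : Subgroup G, C ≤ f k → IsMulCommutative C → B ≤ C → C = B) →
      ∃ t ∈ f (k + 1), Subgroup.map (MulAut.conj t).toMonoidHom A = B)
    (hdiv : ∀ g : G, ∀ n : ℕ, 1 ≤ n → ∃ h : G, h ^ n = g)
    (hCSA : IsCSA G) :
    (∀ A : Subgroup G, IsMaximalAbelian A → ∀ a ∈ A, ∀ n : ℕ, 1 ≤ n → ∃ b ∈ A, b ^ n = a) ∧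
      (∀ A B : Subgroup G, IsMaximalAbelian A → IsMaximalAbelian B →
        ∃ g : G, Subgroup.map (MulAut.conj g).toMonoidHom A = B) := by
  constructor
  · intro A hA a haA n hn
    by_cases ha1 : a = 1
    · exact ⟨1, A.one_mem, by simp [ha1]⟩
    obtain ⟨b, hb⟩ := hdiv a n hn
    have hcomm : b * a = a * b := by rw [← hb]; exact (Commute.self_pow b n).eq
    exact ⟨b, mem_of_commute hCSA hA haA ha1 hcomm, hb⟩
  · intro A B hA hB
    by_cases hAbot : A = ⊥
    · have hBbot : B = ⊥ := by
        subst hAbot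
        exact hA.2 B hB.1 bot_le
      exact ⟨1, by rw [hAbot, hBbot]; ext x; simp⟩
    by_cases hBbot : B = ⊥
    · exact absurd ((hB.2 A hA.1 (hBbot ▸ bot_le)).trans hBbot) hAbot
    obtain ⟨⟨a, haA⟩, ha1'⟩ := Subgroup.ne_bot_iff_exists_ne_one.mp hAbot
    obtain ⟨⟨b, hbB⟩, hb1'⟩ := Subgroup.ne_bot_iff_exists_ne_one.mp hBbot
    have ha1 : a ≠ 1 := fun h => ha1' (Subtype.ext h)
    have hb1 : b ≠ 1 := fun h => hb1' (Subtype.ext h)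
    obtain ⟨ka, hka⟩ := hunion a
    obtain ⟨kb, hkb⟩ := hunion b
    set k := max ka kb with hk
    have hak : (a : G) ∈ f k := hmono (le_max_left ka kb) hka
    have hbk : (b : G) ∈ f k := hmono (le_max_right ka kb) hkb
    -- A ⊓ f k is relatively maximal abelian in f k
    haveI := hA.1
    haveI := hB.1
    have hcommA : IsMulCommutative ↥(A ⊓ f k) :=
      ⟨⟨fun x y => Subtype.ext (Subgroup.mul_comm_of_mem_isMulCommutative
        A x.2.1 y.2.1)⟩⟩
    have hcommB : IsMulCommutative ↥(B ⊓ f k) :=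
      ⟨⟨fun x y => Subtype.ext (Subgroup.mul_comm_of_mem_isMulCommutative
        B x.2.1 y.2.1)⟩⟩
    have hmaxA : ∀ C : Subgroup G, C ≤ f k → IsMulCommutative C → A ⊓ f k ≤ C → C = A ⊓ f k := by
      intro C hCk hCcomm hle
      have haC : a ∈ C := hle ⟨haA, hak⟩
      refine le_antisymm (le_inf ?_ hCk) hle
      intro c hc
      haveI := hCcomm
      exact mem_of_commute hCSA hA haA ha1
        (Subgroup.mul_comm_of_mem_isMulCommutative C hc haC)
    have hmaxB : ∀ C : Subgroup G, C ≤ f k → IsMulCommutative C → B ⊓ f k ≤ C → C = B ⊓ f k := by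
      intro C hCk hCcomm hle
      have hbC : b ∈ C := hle ⟨hbB, hbk⟩
      refine le_antisymm (le_inf ?_ hCk) hle
      intro c hc
      haveI := hCcomm
      exact mem_of_commute hCSA hB hbB hb1
        (Subgroup.mul_comm_of_mem_isMulCommutative C hc hbC)
    obtain ⟨t, _, ht⟩ := hconjstep k (A ⊓ f k) (B ⊓ f k) inf_le_right inf_le_right
      ⟨hcommA, hmaxA⟩ ⟨hcommB, hmaxB⟩
    refine ⟨t, ?_⟩
    have htab : t * a * t⁻¹ ∈ B := by
      have : t * a * t⁻¹ ∈ B ⊓ f k := by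
        rw [← ht]
        exact ⟨a, ⟨haA, hak⟩, rfl⟩
      exact this.1
    have hta1 : t * a * t⁻¹ ≠ 1 := by
      intro h
      apply ha1
      have := congrArg (fun z => t⁻¹ * z * t) h
      simpa [mul_assoc] using this
    ext y
    simp only [Subgroup.mem_map, MulEquiv.coe_toMonoidHom, MulAut.conj_apply]
    constructor
    · rintro ⟨x, hx, rfl⟩
      -- t x t⁻¹ commutes with t a t⁻¹ ∈ B \ {1}
      have hxa : x * a = a * x := Subgroup.mul_comm_of_mem_isMulCommutative A hx haA
      refine mem_of_commute hCSA hB htab hta1 ?_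
      have : (t * x * t⁻¹) * (t * a * t⁻¹) = t * (x * a) * t⁻¹ := by group
      rw [this, hxa]; group
    · intro hy
      refine ⟨t⁻¹ * y * t, ?_, by group⟩
      -- t⁻¹ y t commutes with a
      have hyc : y * (t * a * t⁻¹) = (t * a * t⁻¹) * y :=
        Subgroup.mul_comm_of_mem_isMulCommutative B hy htab
      refine mem_of_commute hCSA hA haA ha1 ?_
      have := congrArg (fun z => t⁻¹ * z * t) hyc
      simpa [mul_assoc] using this
end

section
/- A group G is a CSA-group if and only if G is commutative-transitive and every nontrivial element x satisfies: for all g, if gxg⁻¹ commutes with x then g commutes with x. -/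
/-- Every abelian subgroup is contained in a maximal abelian subgroup (Zorn). -/
lemma exists_maximalAbelian_ge {G : Type*} [Group G] (H : Subgroup G)
    (hH : IsMulCommutative H) : ∃ A : Subgroup G, IsMaximalAbelian A ∧ H ≤ A := by
  have hub : ∀ c ⊆ {B : Subgroup G | IsMulCommutative B}, IsChain (· ≤ ·) c →
      ∀ y ∈ c, ∃ ub ∈ {B : Subgroup G | IsMulCommutative B}, ∀ z ∈ c, z ≤ ub := by
    intro c hc hchain B hB
    refine ⟨sSup c, ?_, fun C hC => le_sSup hC⟩
    have hdir : DirectedOn (· ≤ ·) c := hchain.directedOn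
    have hne : c.Nonempty := ⟨B, hB⟩
    constructor; constructor
    rintro ⟨x, hx⟩ ⟨y, hy⟩
    obtain ⟨Cx, hCx, hxC⟩ := (Subgroup.mem_sSup_of_directedOn hne hdir).1 hx
    obtain ⟨Cy, hCy, hyC⟩ := (Subgroup.mem_sSup_of_directedOn hne hdir).1 hy
    ext
    rcases hchain.total hCx hCy with h | h
    · haveI : IsMulCommutative Cy := hc hCy
      exact Subgroup.mul_comm_of_mem_isMulCommutative (H := Cy) (h hxC) hyC
    · haveI : IsMulCommutative Cx := hc hCx
      exact Subgroup.mul_comm_of_mem_isMulCommutative (H := Cx) hxC (h hyC)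
  obtain ⟨A, hHA, hA, hmax⟩ := zorn_le_nonempty₀
    {B : Subgroup G | IsMulCommutative B} hub H hH
  exact ⟨A, ⟨hA, fun B hB hAB => le_antisymm (hmax hB hAB) hAB⟩, hHA⟩

lemma closure_pair_isCommutative {G : Type*} [Group G] {a b : G} (h : Commute a b) :
    IsMulCommutative (Subgroup.closure {a, b}) := by
  have hcomm : ∀ x ∈ ({a, b} : Set G), ∀ y ∈ ({a, b} : Set G), x * y = y * x := by
    rintro x (rfl | rfl) y (rfl | rfl)
    · rfl
    · exact h
    · exact h.symm
    · rfl
  have hcl := Subgroup.closure_le_centralizer_centralizer ({a, b} : Set G)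
  exact ⟨⟨fun ⟨x, hx⟩ ⟨y, hy⟩ => Subtype.ext
    (Set.centralizer_centralizer_comm_of_comm hcomm x (hcl hx) y (hcl hy))⟩⟩

theorem stmt_15 {G : Type*} [Group G] :
    IsCSA G ↔
      ((∀ a b c : G, a ≠ 1 → b ≠ 1 → c ≠ 1 → Commute a b → Commute b c → Commute a c) ∧
        ∀ x : G, x ≠ 1 → ∀ g : G, Commute (g * x * g⁻¹) x → Commute g x) := by
  constructor
  · intro hcsa
    constructor
    · intro a b c ha hb hc hab hbc
      obtain ⟨A, hA, hle⟩ := exists_maximalAbelian_ge _ (closure_pair_isCommutative hab)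
      have haA : a ∈ A := hle (Subgroup.subset_closure (by simp))
      have hbA : b ∈ A := hle (Subgroup.subset_closure (by simp))
      have hcA : c ∈ A := by
        refine hcsa A hA c ⟨b, hb, hbA, ?_⟩
        have : c⁻¹ * b * c = b := by
          rw [mul_assoc, hbc.eq, ← mul_assoc, inv_mul_cancel, one_mul]
        rw [this]; exact hbA
      haveI := hA.1
      exact Subgroup.mul_comm_of_mem_isMulCommutative (H := A) haA hcA
    · intro x hx g hcomm
      obtain ⟨A, hA, hle⟩ := exists_maximalAbelian_ge _ (closure_pair_isCommutative hcomm)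
      have hxA : x ∈ A := hle (Subgroup.subset_closure (by simp))
      have hyA : g * x * g⁻¹ ∈ A := hle (Subgroup.subset_closure (by simp))
      have hgA : g ∈ A := by
        refine hcsa A hA g ⟨g * x * g⁻¹, by simp [hx], hyA, ?_⟩
        have : g⁻¹ * (g * x * g⁻¹) * g = x := by group
        rw [this]; exact hxA
      haveI := hA.1
      exact Subgroup.mul_comm_of_mem_isMulCommutative (H := A) hgA hxA
  · rintro ⟨hct, hcond⟩ A ⟨hAcomm, hAmax⟩ g ⟨x, hx, hxA, hxcA⟩
    -- centralizer of x is abelian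
    have hcent : IsMulCommutative (Subgroup.centralizer {x}) := by
      constructor; constructor
      rintro ⟨a, ha⟩ ⟨b, hb⟩
      rw [Subgroup.mem_centralizer_singleton_iff] at ha hb
      ext
      show a * b = b * a
      rcases eq_or_ne a 1 with rfl | ha1
      · simp
      rcases eq_or_ne b 1 with rfl | hb1
      · simp
      exact hct a x b ha1 hx hb1 ha hb.symm
    have hAle : A ≤ Subgroup.centralizer {x} := by
      intro a haA
      rw [Subgroup.mem_centralizer_singleton_iff]
      exact Subgroup.mul_comm_of_mem_isMulCommutative (H := A) haA hxA
    haveI := hAcomm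
    have hEq : Subgroup.centralizer {x} = A := hAmax _ hcent hAle
    -- g⁻¹ x g commutes with x since both in A
    have h1 : Commute (g⁻¹ * x * g) x :=
      Subgroup.mul_comm_of_mem_isMulCommutative (H := A) hxcA hxA
    have h2 : Commute g⁻¹ x := hcond x hx g⁻¹ (by simpa using h1)
    have : g ∈ Subgroup.centralizer {x} := by
      rw [Subgroup.mem_centralizer_singleton_iff]
      simpa using h2.inv_left.eq
    rw [hEq] at this
    exact this
end
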